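/- The function l(p) = c / ((1 + a·p)^b − d) + e is strictly convex on the set {p > 0 : (1 + a·p)^b > d}, where a, c > 0, b ≥ 1, d ≥ 1, and e ∈ ℝ. -/

import Mathlib

/-- The LQR-cost function `l(p) = c / ((1 + a·p)^b − d) + e` is strictly convex
on `{p > 0 : (1 + a·p)^b > d}`, for `a, c > 0`, `b ≥ 1`, `d ≥ 1`, `e ∈ ℝ`. -/
theorem stmt_1 (a b c d e : ℝ) (ha : 0 < a) (hb : 1 ≤ b) (hc : 0 < c) (hd : 1 ≤ d) :
    StrictConvexOn ℝ {p : ℝ | 0 < p ∧ d < (1 + a * p) ^ b}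
      (fun p : ℝ => c / ((1 + a * p) ^ b - d) + e) := by
  set S : Set ℝ := {p : ℝ | 0 < p ∧ d < (1 + a * p) ^ b} with hSdef
  have hb0 : (0:ℝ) ≤ b := by linarith
  -- basic facts on the set
  have hu1 : ∀ p ∈ S, 1 < 1 + a * p := by
    intro p hp
    have : 0 < a * p := mul_pos ha hp.1
    linarith
  have hu0 : ∀ p ∈ S, (0:ℝ) < 1 + a * p := fun p hp => lt_trans one_pos (hu1 p hp)
  have ht0 : ∀ p ∈ S, (0:ℝ) < (1 + a * p) ^ b - d := fun p hp => sub_pos.2 hp.2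
  -- S is open
  have hS : IsOpen S := by
    have h1 : IsOpen {p : ℝ | 0 < p} := isOpen_lt continuous_const continuous_id
    have hcont : ContinuousOn (fun p : ℝ => (1 + a * p) ^ b) {p : ℝ | 0 < p} := by
      apply ContinuousOn.rpow_const
      · exact (continuous_const.add (continuous_const.mul continuous_id)).continuousOn
      · intro x hx
        left
        have : 0 < a * x := mul_pos ha hx
        positivity
    have := hcont.isOpen_inter_preimage h1 isOpen_Ioi (t := Set.Ioi d)
    convert this using 1
    rfl
  -- S is convex
  have hconv : Convex ℝ S := by
    intro x hx y hy α β hα hβ hαβ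
    have hm : min x y ≤ α • x + β • y := by
      simp only [smul_eq_mul]
      have h1 : α * min x y + β * min x y = min x y := by rw [← add_mul, hαβ, one_mul]
      nlinarith [mul_nonneg hα (sub_nonneg.2 (min_le_left x y)),
        mul_nonneg hβ (sub_nonneg.2 (min_le_right x y))]
    have hmpos : 0 < min x y := lt_min hx.1 hy.1
    refine ⟨lt_of_lt_of_le hmpos hm, ?_⟩
    have hdm : d < (1 + a * min x y) ^ b := by
      rcases min_choice x y with h | h <;> rw [h]
      exacts [hx.2, hy.2]
    refine lt_of_lt_of_le hdm (Real.rpow_le_rpow (by positivity) ?_ hb0)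
    have := mul_le_mul_of_nonneg_left hm ha.le
    simp only [smul_eq_mul] at this ⊢
    linarith
  -- first derivative
  set F' : ℝ → ℝ := fun p =>
    -(c * a * b) * ((1 + a * p) ^ (b - 1) / ((1 + a * p) ^ b - d) ^ 2) with hF'def
  have hder : ∀ p ∈ S,
      HasDerivAt (fun p : ℝ => c / ((1 + a * p) ^ b - d) + e) (F' p) p := by
    intro p hp
    have h1 : HasDerivAt (fun p : ℝ => 1 + a * p) a p := by
      simpa using ((hasDerivAt_id p).const_mul a).const_add 1
    have hne : (1 + a * p) ≠ 0 := (hu0 p hp).ne'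
    have h2 : HasDerivAt (fun p : ℝ => (1 + a * p) ^ b)
        (a * b * (1 + a * p) ^ (b - 1)) p := h1.rpow_const (Or.inl hne)
    have h3 := h2.sub_const d
    have hne2 : (1 + a * p) ^ b - d ≠ 0 := (ht0 p hp).ne'
    have h4 := ((hasDerivAt_const p c).div h3 hne2).add_const e
    convert (show HasDerivAt (fun p : ℝ => c / ((1 + a * p) ^ b - d) + e) _ p from h4) using 1
    ring
  -- second derivative
  have hder2 : ∀ p ∈ S, 0 < deriv F' p := by
    intro p hp
    have h1 : HasDerivAt (fun p : ℝ => 1 + a * p) a p := by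
      simpa using ((hasDerivAt_id p).const_mul a).const_add 1
    have hne : (1 + a * p) ≠ 0 := (hu0 p hp).ne'
    have hN : HasDerivAt (fun p : ℝ => (1 + a * p) ^ (b - 1))
        (a * (b - 1) * (1 + a * p) ^ (b - 1 - 1)) p := h1.rpow_const (Or.inl hne)
    have h2 : HasDerivAt (fun p : ℝ => (1 + a * p) ^ b)
        (a * b * (1 + a * p) ^ (b - 1)) p := h1.rpow_const (Or.inl hne)
    have hD : HasDerivAt (fun p : ℝ => ((1 + a * p) ^ b - d) ^ 2)
        ((2:ℕ) * ((1 + a * p) ^ b - d) ^ 1 * (a * b * (1 + a * p) ^ (b - 1))) p :=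
      (h2.sub_const d).pow 2
    have hD0 : ((1 + a * p) ^ b - d) ^ 2 ≠ 0 := pow_ne_zero 2 (ht0 p hp).ne'
    have hQ := (hN.div hD hD0).const_mul (-(c * a * b))
    rw [(show HasDerivAt F' _ p from hQ).deriv]
    -- abbreviations
    set u : ℝ := 1 + a * p with hu
    have hupos : 0 < u := hu0 p hp
    set t : ℝ := u ^ b - d with htd
    have htpos : 0 < t := ht0 p hp
    set N : ℝ := u ^ (b - 1) with hN'
    set Y : ℝ := u ^ (b - 1 - 1) with hY'
    have hNpos : 0 < N := Real.rpow_pos_of_pos hupos _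
    have hYpos : 0 < Y := Real.rpow_pos_of_pos hupos _
    have hNN : N * N = u ^ (2 * b - 2) := by
      rw [hN', ← Real.rpow_add hupos]; ring_nf
    have hYu : Y * u ^ b = u ^ (2 * b - 2) := by
      rw [hY', ← Real.rpow_add hupos]; ring_nf
    have hX2 : 0 < u ^ (2 * b - 2) := Real.rpow_pos_of_pos hupos _
    have key : (b - 1) * (Y * t) < 2 * b * (N * N) := by
      have hYt : Y * t = u ^ (2 * b - 2) - d * Y := by
        rw [htd, mul_sub, hYu]; ring
      rw [hYt, hNN]
      nlinarith [mul_nonneg (by linarith : (0:ℝ) ≤ b - 1)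
          (mul_nonneg (by linarith : (0:ℝ) ≤ d) hYpos.le),
        mul_pos (by linarith : (0:ℝ) < b + 1) hX2]
    have hnum : a * (b - 1) * Y * t ^ 2 - N * ((2:ℕ) * t ^ 1 * (a * b * N)) < 0 := by
      have heq : a * (b - 1) * Y * t ^ 2 - N * ((2:ℕ) * t ^ 1 * (a * b * N))
          = a * t * ((b - 1) * (Y * t) - 2 * b * (N * N)) := by push_cast; ring
      rw [heq]
      exact mul_neg_of_pos_of_neg (mul_pos ha htpos) (by linarith)
    have hDD : 0 < (t ^ 2) ^ 2 := by positivity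
    have : (a * (b - 1) * Y * t ^ 2 - N * ((2:ℕ) * t ^ 1 * (a * b * N))) / (t ^ 2) ^ 2 < 0 :=
      div_neg_of_neg_of_pos hnum hDD
    have hcab : -(c * a * b) < 0 := by
      have : 0 < c * a * b := mul_pos (mul_pos hc ha) (by linarith)
      linarith
    exact mul_pos_of_neg_of_neg hcab this
  -- conclude
  apply strictConvexOn_of_deriv2_pos hconv
  · intro p hp
    exact ((hder p hp).differentiableAt.continuousAt).continuousWithinAt
  · intro x hx
    rw [hS.interior_eq] at hx
    have hev : deriv (fun p : ℝ => c / ((1 + a * p) ^ b - d) + e) =ᶠ[nhds x] F' :=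
      Filter.eventuallyEq_of_mem (hS.mem_nhds hx) (fun y hy => (hder y hy).deriv)
    show 0 < deriv (deriv fun p : ℝ => c / ((1 + a * p) ^ b - d) + e) x
    rw [hev.deriv_eq]
    exact hder2 x hx
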